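/- Let Δ ≥ 4 be an integer and define F(i,j) = (4Δ−6)(1/i + 1/j) + Δ² − 6Δ + 3 + 6/Δ − (i−j)² for integers 1 ≤ i ≤ j ≤ Δ. Then F(i,j) ≥ 0 for all 1 ≤ i ≤ j ≤ Δ, and F(i,j) = 0 if and only if (i,j) = (1,Δ) or (i,j) = (2,Δ). -/
import Mathlib


/-- The dual slack function. -/
noncomputable def F (Δ i j : ℕ) : ℝ :=
  (4 * (Δ : ℝ) - 6) * (1 / (i : ℝ) + 1 / (j : ℝ))
    + (Δ : ℝ) ^ 2 - 6 * (Δ : ℝ) + 3 + 6 / (Δ : ℝ) - ((i : ℝ) - (j : ℝ)) ^ 2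

set_option maxHeartbeats 1000000 in
/-- Dual feasibility: `F(i,j) ≥ 0` for all `1 ≤ i ≤ j ≤ Δ`, with equality
exactly for `(1,Δ)` and `(2,Δ)`. -/
theorem F_nonneg_and_eq_zero_iff (Δ : ℕ) (hΔ : 4 ≤ Δ)
    (i j : ℕ) (hi : 1 ≤ i) (hij : i ≤ j) (hj : j ≤ Δ) :
    0 ≤ F Δ i j ∧ (F Δ i j = 0 ↔ (i = 1 ∧ j = Δ) ∨ (i = 2 ∧ j = Δ)) := by
  have hD4 : (4 : ℝ) ≤ (Δ : ℝ) := by exact_mod_cast hΔ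
  have hD0 : (0 : ℝ) < (Δ : ℝ) := by linarith
  have hDne : ((Δ : ℝ)) ≠ 0 := ne_of_gt hD0
  have hx1 : (1 : ℝ) ≤ (i : ℝ) := by exact_mod_cast hi
  have hxy : (i : ℝ) ≤ (j : ℝ) := by exact_mod_cast hij
  have hyD : (j : ℝ) ≤ (Δ : ℝ) := by exact_mod_cast hj
  have hx0 : (0 : ℝ) < (i : ℝ) := by linarith
  have hy0 : (0 : ℝ) < (j : ℝ) := by linarith
  have hxne : ((i : ℝ)) ≠ 0 := ne_of_gt hx0
  have hyne : ((j : ℝ)) ≠ 0 := ne_of_gt hy0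
  have hsplit : F Δ i j = F Δ i Δ + ((4 * (Δ : ℝ) - 6) * (1 / (j : ℝ) - 1 / (Δ : ℝ))
      + (((Δ : ℝ) - (i : ℝ)) ^ 2 - ((j : ℝ) - (i : ℝ)) ^ 2)) := by
    unfold F
    field_simp
    ring
  obtain ⟨s, hs_def⟩ : ∃ s : ℝ, s = (4 * (Δ : ℝ) - 6) * (1 / (j : ℝ) - 1 / (Δ : ℝ))
      + (((Δ : ℝ) - (i : ℝ)) ^ 2 - ((j : ℝ) - (i : ℝ)) ^ 2) := ⟨_, rfl⟩
  rw [← hs_def] at hsplit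
  have h2 : ((j : ℝ) - (i : ℝ)) ^ 2 ≤ ((Δ : ℝ) - (i : ℝ)) ^ 2 := by nlinarith
  have hs_nonneg : 0 ≤ s := by
    have h1 : 1 / (Δ : ℝ) ≤ 1 / (j : ℝ) := one_div_le_one_div_of_le hy0 hyD
    have hA : 0 ≤ (4 * (Δ : ℝ) - 6) * (1 / (j : ℝ) - 1 / (Δ : ℝ)) :=
      mul_nonneg (by linarith) (by linarith)
    rw [hs_def]; linarith
  have hs_pos : (j : ℝ) < (Δ : ℝ) → 0 < s := by
    intro h
    have h1 : 1 / (Δ : ℝ) < 1 / (j : ℝ) := one_div_lt_one_div_of_lt hy0 h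
    have hA : 0 < (4 * (Δ : ℝ) - 6) * (1 / (j : ℝ) - 1 / (Δ : ℝ)) :=
      mul_pos (by linarith) (by linarith)
    rw [hs_def]; linarith
  have hjD_of : j = Δ → s = 0 := by
    intro h
    subst h
    rw [hs_def]; ring
  have hs_zero_jD : s = 0 → j = Δ := by
    intro h
    by_contra hne
    have : (j : ℝ) < (Δ : ℝ) := lt_of_le_of_ne hyD (by exact_mod_cast hne)
    exact absurd h (ne_of_gt (hs_pos this))
  obtain h1 | h2' | h3 : i = 1 ∨ i = 2 ∨ 3 ≤ i := by omega
  · -- i = 1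
    subst h1
    have hF1 : F Δ 1 Δ = 0 := by
      unfold F
      push_cast
      field_simp
      ring
    rw [hsplit, hF1, zero_add]
    refine ⟨hs_nonneg, ?_⟩
    constructor
    · intro h
      exact Or.inl ⟨rfl, hs_zero_jD h⟩
    · rintro (⟨-, hj'⟩ | ⟨habs, -⟩)
      · exact hjD_of hj'
      · exact absurd habs (by norm_num)
  · -- i = 2
    subst h2'
    have hF2 : F Δ 2 Δ = 0 := by
      unfold F
      push_cast
      field_simp
      ring
    rw [hsplit, hF2, zero_add]
    refine ⟨hs_nonneg, ?_⟩
    constructor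
    · intro h
      exact Or.inr ⟨rfl, hs_zero_jD h⟩
    · rintro (⟨habs, -⟩ | ⟨-, hj'⟩)
      · exact absurd habs (by norm_num)
      · exact hjD_of hj'
  · -- i ≥ 3
    have hx3 : (3 : ℝ) ≤ (i : ℝ) := by exact_mod_cast h3
    have hxD : (i : ℝ) ≤ (Δ : ℝ) := le_trans hxy hyD
    have hFD : F Δ i Δ = ((Δ : ℝ) * ((4 * (Δ : ℝ) - 6)
        + (i : ℝ) * (2 * (Δ : ℝ) * (i : ℝ) - (i : ℝ) ^ 2 - 6 * (Δ : ℝ) + 7)))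
        / ((i : ℝ) * (Δ : ℝ)) := by
      unfold F
      field_simp
      ring
    have ht1 : 0 ≤ (i : ℝ) * ((i : ℝ) - 3) * (2 * (Δ : ℝ) - (i : ℝ) - 3) :=
      mul_nonneg (mul_nonneg (le_of_lt hx0) (by linarith)) (by linarith)
    have hnum : 0 < (4 * (Δ : ℝ) - 6)
        + (i : ℝ) * (2 * (Δ : ℝ) * (i : ℝ) - (i : ℝ) ^ 2 - 6 * (Δ : ℝ) + 7) := by
      nlinarith [ht1]
    have hFDpos : 0 < F Δ i Δ := by
      rw [hFD]
      exact div_pos (mul_pos hD0 hnum) (mul_pos hx0 hD0)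
    have hFpos : 0 < F Δ i j := by
      rw [hsplit]; linarith
    refine ⟨le_of_lt hFpos, ?_⟩
    constructor
    · intro h
      exact absurd h (ne_of_gt hFpos)
    · rintro (⟨habs, -⟩ | ⟨habs, -⟩) <;> omega
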